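/- Let ã: [0,T] → ℝ^{d×d} be continuous with y'ã(τ)y ≥ η‖y‖² for all y and some η > 0, and let Φ(s,τ) be a continuous family of invertible matrices with ‖Φ(s,τ)‖ ≤ C uniformly. Define H̃(s)⁻¹ = ∫_s^T Φ(s,τ) ã(τ) Φ(s,τ)' dτ. Then there exist constants 0 < c ≤ c̃ such that c(T-s)‖y‖² ≤ y'H̃(s)⁻¹y ≤ c̃(T-s)‖y‖² for all s ∈ [0,T) and y ∈ ℝ^d. -/

import Mathlib

open Matrix intervalIntegral

attribute [local instance] Matrix.normedAddCommGroup Matrix.normedSpace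

lemma aux_dot_self_nonneg {d : ℕ} (v : Fin d → ℝ) : 0 ≤ v ⬝ᵥ v :=
  Finset.sum_nonneg fun _ _ => mul_self_nonneg _

lemma aux_sq_sum_abs {d : ℕ} (w : Fin d → ℝ) :
    (∑ j, |w j|) ^ 2 ≤ (d : ℝ) * (w ⬝ᵥ w) := by
  have h := sq_sum_le_card_mul_sum_sq (s := (Finset.univ : Finset (Fin d)))
    (f := fun j => |w j|)
  simpa [dotProduct, sq_abs, Finset.card_univ, sq, mul_comm] using h

lemma aux_abs_mulVec_le {d : ℕ} (B : Matrix (Fin d) (Fin d) ℝ) (w : Fin d → ℝ)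
    (m : ℝ) (h : ∀ i j, |B i j| ≤ m) (i : Fin d) :
    |(B *ᵥ w) i| ≤ m * ∑ j, |w j| := by
  calc |(B *ᵥ w) i| = |∑ j, B i j * w j| := by rfl
    _ ≤ ∑ j, |B i j * w j| := Finset.abs_sum_le_sum_abs _ _
    _ ≤ ∑ j, m * |w j| := Finset.sum_le_sum fun j _ => by
        rw [abs_mul]; exact mul_le_mul_of_nonneg_right (h i j) (abs_nonneg _)
    _ = m * ∑ j, |w j| := by rw [Finset.mul_sum]

lemma aux_mulVec_dot {d : ℕ} (B : Matrix (Fin d) (Fin d) ℝ) (w : Fin d → ℝ)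
    (m : ℝ) (h : ∀ i j, |B i j| ≤ m) :
    (B *ᵥ w) ⬝ᵥ (B *ᵥ w) ≤ (d : ℝ) ^ 2 * m ^ 2 * (w ⬝ᵥ w) := by
  have hstep : ∀ i : Fin d, ((B *ᵥ w) i) ^ 2 ≤ m ^ 2 * ((d : ℝ) * (w ⬝ᵥ w)) := by
    intro i
    have h1 := aux_abs_mulVec_le B w m h i
    have h2 : ((B *ᵥ w) i) ^ 2 ≤ (m * ∑ j, |w j|) ^ 2 := by
      rw [← sq_abs]
      exact pow_le_pow_left₀ (abs_nonneg _) h1 2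
    have h4 := aux_sq_sum_abs w
    calc ((B *ᵥ w) i) ^ 2 ≤ m ^ 2 * (∑ j, |w j|) ^ 2 := by nlinarith [h2]
      _ ≤ m ^ 2 * ((d : ℝ) * (w ⬝ᵥ w)) :=
          mul_le_mul_of_nonneg_left h4 (sq_nonneg m)
  calc (B *ᵥ w) ⬝ᵥ (B *ᵥ w) = ∑ i, ((B *ᵥ w) i) ^ 2 := by
        simp [dotProduct, sq]
    _ ≤ ∑ _i : Fin d, m ^ 2 * ((d : ℝ) * (w ⬝ᵥ w)) :=
        Finset.sum_le_sum fun i _ => hstep i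
    _ = (d : ℝ) ^ 2 * m ^ 2 * (w ⬝ᵥ w) := by
        simp [Finset.sum_const, Finset.card_univ]; ring

lemma aux_quad_bound {d : ℕ} (a : Matrix (Fin d) (Fin d) ℝ) (x : Fin d → ℝ)
    (m : ℝ) (hm : 0 ≤ m) (h : ∀ i j, |a i j| ≤ m) :
    x ⬝ᵥ (a *ᵥ x) ≤ m * (d : ℝ) * (x ⬝ᵥ x) := by
  calc x ⬝ᵥ (a *ᵥ x) ≤ |x ⬝ᵥ (a *ᵥ x)| := le_abs_self _
    _ ≤ ∑ i, |x i * (a *ᵥ x) i| := Finset.abs_sum_le_sum_abs _ _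
    _ ≤ ∑ i, |x i| * (m * ∑ j, |x j|) := Finset.sum_le_sum fun i _ => by
        rw [abs_mul]
        exact mul_le_mul_of_nonneg_left (aux_abs_mulVec_le a x m h i) (abs_nonneg _)
    _ = m * (∑ i, |x i|) ^ 2 := by rw [← Finset.sum_mul]; ring
    _ ≤ m * ((d : ℝ) * (x ⬝ᵥ x)) := mul_le_mul_of_nonneg_left (aux_sq_sum_abs x) hm
    _ = m * (d : ℝ) * (x ⬝ᵥ x) := by ring

/-- quadratic form in the matrix, as a continuous linear map -/
noncomputable def auxQF {d : ℕ} (y : Fin d → ℝ) :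
    Matrix (Fin d) (Fin d) ℝ →L[ℝ] ℝ :=
  LinearMap.toContinuousLinearMap
    { toFun := fun A => y ⬝ᵥ (A *ᵥ y)
      map_add' := fun A B => by simp [Matrix.add_mulVec, dotProduct_add]
      map_smul' := fun r A => by simp [Matrix.smul_mulVec, dotProduct_smul] }

@[simp] lemma auxQF_apply {d : ℕ} (y : Fin d → ℝ) (A : Matrix (Fin d) (Fin d) ℝ) :
    auxQF y A = y ⬝ᵥ (A *ᵥ y) := rfl

set_option maxHeartbeats 1000000 in
/-- Two-sided bound of Lemma 5.3 on
`H̃(s)⁻¹ = ∫_s^T Φ(s,τ) ã(τ) Φ(s,τ)' dτ`: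
`c (T-s) ‖y‖² ≤ y' H̃(s)⁻¹ y ≤ c̃ (T-s) ‖y‖²`. -/
theorem stmt_6 {d : ℕ} (T : ℝ) (hT : 0 < T)
    (atil : ℝ → Matrix (Fin d) (Fin d) ℝ)
    (ha_cont : ContinuousOn atil (Set.Icc 0 T))
    (η : ℝ) (hη : 0 < η)
    (ha_ell : ∀ τ ∈ Set.Icc (0 : ℝ) T, ∀ y : Fin d → ℝ,
      η * (y ⬝ᵥ y) ≤ y ⬝ᵥ (atil τ *ᵥ y))
    (Φ : ℝ → ℝ → Matrix (Fin d) (Fin d) ℝ)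
    (hΦcont : ContinuousOn (fun p : ℝ × ℝ => Φ p.1 p.2)
      (Set.Icc 0 T ×ˢ Set.Icc 0 T))
    (hΦinv : ∀ s ∈ Set.Icc (0 : ℝ) T, ∀ τ ∈ Set.Icc (0 : ℝ) T, IsUnit (Φ s τ))
    (C : ℝ) (hΦC : ∀ s ∈ Set.Icc (0 : ℝ) T, ∀ τ ∈ Set.Icc (0 : ℝ) T, ‖Φ s τ‖ ≤ C)
    (Hinv : ℝ → Matrix (Fin d) (Fin d) ℝ)
    (hHinv : ∀ s ∈ Set.Ico (0 : ℝ) T,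
      Hinv s = ∫ τ in s..T, Φ s τ * atil τ * (Φ s τ)ᵀ) :
    ∃ c ctil : ℝ, 0 < c ∧ c ≤ ctil ∧ ∀ s ∈ Set.Ico (0 : ℝ) T, ∀ y : Fin d → ℝ,
      c * (T - s) * (y ⬝ᵥ y) ≤ y ⬝ᵥ (Hinv s *ᵥ y) ∧
      y ⬝ᵥ (Hinv s *ᵥ y) ≤ ctil * (T - s) * (y ⬝ᵥ y) := by
  classical
  set K : Set (ℝ × ℝ) := Set.Icc 0 T ×ˢ Set.Icc 0 T with hK
  have hKcomp : IsCompact K := isCompact_Icc.prod isCompact_Icc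
  -- continuity of the pointwise inverse on K
  have hdet : ∀ p ∈ K, (Φ p.1 p.2).det ≠ 0 := by
    intro p hp
    have := (Matrix.isUnit_iff_isUnit_det _).mp (hΦinv p.1 hp.1 p.2 hp.2)
    exact this.ne_zero
  have hΨcont : ContinuousOn (fun p : ℝ × ℝ => (Φ p.1 p.2)⁻¹) K := by
    have hdetc : ContinuousOn (fun p : ℝ × ℝ => (Φ p.1 p.2).det) K :=
      (Continuous.matrix_det continuous_id).comp_continuousOn hΦcont
    have hadjc : ContinuousOn (fun p : ℝ × ℝ => (Φ p.1 p.2).adjugate) K :=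
      (Continuous.matrix_adjugate continuous_id).comp_continuousOn hΦcont
    have hinvdet : ContinuousOn (fun p : ℝ × ℝ => ((Φ p.1 p.2).det)⁻¹) K :=
      hdetc.inv₀ hdet
    have : ContinuousOn
        (fun p : ℝ × ℝ => ((Φ p.1 p.2).det)⁻¹ • (Φ p.1 p.2).adjugate) K :=
      hinvdet.smul hadjc
    refine this.congr fun p hp => ?_
    rw [Matrix.inv_def, Ring.inverse_eq_inv]
  obtain ⟨M, hM⟩ := hKcomp.exists_bound_of_continuousOn hΨcont
  obtain ⟨Ka, hKa⟩ := isCompact_Icc.exists_bound_of_continuousOn ha_cont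
  set M' : ℝ := max M 1 with hM'
  set C' : ℝ := max C 1 with hC'
  set Ka' : ℝ := max Ka 1 with hKa'
  have hM'1 : (1 : ℝ) ≤ M' := le_max_right _ _
  have hC'1 : (1 : ℝ) ≤ C' := le_max_right _ _
  have hKa'1 : (1 : ℝ) ≤ Ka' := le_max_right _ _
  set D : ℝ := ((d : ℝ) + 1) ^ 2 * M' ^ 2 with hD
  have hDpos : 0 < D := by positivity
  set c₀ : ℝ := η / D with hc₀
  have hc₀pos : 0 < c₀ := div_pos hη hDpos
  set ctil : ℝ := Ka' * ((d : ℝ) + 1) ^ 3 * C' ^ 2 with hctil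
  have hctilpos : 0 < ctil := by positivity
  set c : ℝ := min c₀ ctil with hc
  have hcpos : 0 < c := lt_min hc₀pos hctilpos
  refine ⟨c, ctil, hcpos, min_le_right _ _, ?_⟩
  intro s hs y
  have hs0 : s ∈ Set.Icc (0 : ℝ) T := ⟨hs.1, le_of_lt hs.2⟩
  have hsle : s ≤ T := le_of_lt hs.2
  have hyy : 0 ≤ y ⬝ᵥ y := aux_dot_self_nonneg y
  -- pointwise two-sided bound
  have key : ∀ τ ∈ Set.Icc s T,
      c₀ * (y ⬝ᵥ y) ≤ y ⬝ᵥ ((Φ s τ * atil τ * (Φ s τ)ᵀ) *ᵥ y) ∧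
      y ⬝ᵥ ((Φ s τ * atil τ * (Φ s τ)ᵀ) *ᵥ y) ≤ ctil * (y ⬝ᵥ y) := by
    intro τ hτ
    have hτ0 : τ ∈ Set.Icc (0 : ℝ) T := ⟨le_trans hs.1 hτ.1, hτ.2⟩
    set P := Φ s τ with hP
    set x : Fin d → ℝ := Pᵀ *ᵥ y with hx
    have hxx : 0 ≤ x ⬝ᵥ x := aux_dot_self_nonneg x
    have hQ : y ⬝ᵥ ((P * atil τ * Pᵀ) *ᵥ y) = x ⬝ᵥ (atil τ *ᵥ x) := by
      rw [← Matrix.mulVec_mulVec, ← Matrix.mulVec_mulVec,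
        Matrix.dotProduct_mulVec, ← Matrix.mulVec_transpose]
    have hPdet : IsUnit P.det :=
      (Matrix.isUnit_iff_isUnit_det _).mp (hΦinv s hs0 τ hτ0)
    -- transfer bounds on entries
    have hPK : (s, τ) ∈ K := ⟨hs0, hτ0⟩
    have hPentry : ∀ i j, |Pᵀ i j| ≤ C' := fun i j =>
      le_trans (Matrix.norm_entry_le_entrywise_sup_norm P)
        (le_trans (hΦC s hs0 τ hτ0) (le_max_left _ _))
    have hPinv_entry : ∀ i j, |(P⁻¹)ᵀ i j| ≤ M' := fun i j =>
      le_trans (Matrix.norm_entry_le_entrywise_sup_norm (P⁻¹))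
        (le_trans (hM (s, τ) hPK) (le_max_left _ _))
    have ha_entry : ∀ i j, |atil τ i j| ≤ Ka' := fun i j =>
      le_trans (Matrix.norm_entry_le_entrywise_sup_norm (atil τ))
        (le_trans (hKa τ hτ0) (le_max_left _ _))
    -- x ⬝ x ≤ d² C'² (y ⬝ y)
    have hxy : x ⬝ᵥ x ≤ (d : ℝ) ^ 2 * C' ^ 2 * (y ⬝ᵥ y) :=
      aux_mulVec_dot Pᵀ y C' hPentry
    -- y ⬝ y ≤ d² M'² (x ⬝ x)
    have hy_rec : y = (P⁻¹)ᵀ *ᵥ x := by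
      rw [hx, Matrix.mulVec_mulVec, Matrix.transpose_nonsing_inv,
        Matrix.nonsing_inv_mul _ (by rwa [Matrix.det_transpose]),
        Matrix.one_mulVec]
    have hyx : y ⬝ᵥ y ≤ (d : ℝ) ^ 2 * M' ^ 2 * (x ⬝ᵥ x) := by
      calc y ⬝ᵥ y = ((P⁻¹)ᵀ *ᵥ x) ⬝ᵥ ((P⁻¹)ᵀ *ᵥ x) := by rw [← hy_rec]
        _ ≤ (d : ℝ) ^ 2 * M' ^ 2 * (x ⬝ᵥ x) := aux_mulVec_dot _ x M' hPinv_entry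
    constructor
    · -- lower bound
      rw [hQ]
      have h1 : η * (x ⬝ᵥ x) ≤ x ⬝ᵥ (atil τ *ᵥ x) := ha_ell τ hτ0 x
      have h2 : y ⬝ᵥ y ≤ D * (x ⬝ᵥ x) := by
        refine le_trans hyx ?_
        have : (d : ℝ) ^ 2 * M' ^ 2 ≤ D := by
          rw [hD]
          have h3 : (d : ℝ) ^ 2 ≤ ((d : ℝ) + 1) ^ 2 := by nlinarith [Nat.cast_nonneg (α := ℝ) d]
          nlinarith [sq_nonneg M']
        exact mul_le_mul_of_nonneg_right this hxx
      have : c₀ * (y ⬝ᵥ y) ≤ η * (x ⬝ᵥ x) := by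
        rw [hc₀, div_mul_eq_mul_div, div_le_iff₀ hDpos]
        calc η * (y ⬝ᵥ y) ≤ η * (D * (x ⬝ᵥ x)) :=
              mul_le_mul_of_nonneg_left h2 (le_of_lt hη)
          _ = η * (x ⬝ᵥ x) * D := by ring
      exact le_trans this h1
    · -- upper bound
      rw [hQ]
      have h1 : x ⬝ᵥ (atil τ *ᵥ x) ≤ Ka' * (d : ℝ) * (x ⬝ᵥ x) :=
        aux_quad_bound (atil τ) x Ka' (le_trans zero_le_one hKa'1) ha_entry
      have h2 : Ka' * (d : ℝ) * (x ⬝ᵥ x)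
          ≤ Ka' * (d : ℝ) * ((d : ℝ) ^ 2 * C' ^ 2 * (y ⬝ᵥ y)) := by
        refine mul_le_mul_of_nonneg_left hxy ?_
        have : (0 : ℝ) ≤ (d : ℝ) := Nat.cast_nonneg _
        nlinarith
      refine le_trans h1 (le_trans h2 ?_)
      rw [hctil]
      have hd1 : (d : ℝ) ≤ (d : ℝ) + 1 := by linarith
      have hd0 : (0 : ℝ) ≤ (d : ℝ) := Nat.cast_nonneg _
      nlinarith [sq_nonneg C', sq_nonneg ((d:ℝ)+1), hyy,
        mul_nonneg (mul_nonneg (le_trans zero_le_one hKa'1) hd0) hd0]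
  -- continuity and integrability of the integrand
  have hmapsto : ∀ τ ∈ Set.Icc s T, ((s, τ) : ℝ × ℝ) ∈ K := fun τ hτ =>
    ⟨hs0, ⟨le_trans hs.1 hτ.1, hτ.2⟩⟩
  have hΦs : ContinuousOn (fun τ => Φ s τ) (Set.Icc s T) := by
    have hpair : ContinuousOn (fun τ : ℝ => ((s, τ) : ℝ × ℝ)) (Set.Icc s T) :=
      (continuous_const.prodMk continuous_id).continuousOn
    exact hΦcont.comp hpair hmapsto
  have has : ContinuousOn atil (Set.Icc s T) :=
    ha_cont.mono (Set.Icc_subset_Icc hs.1 le_rfl)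
  have hGcont : ContinuousOn (fun τ => Φ s τ * atil τ * (Φ s τ)ᵀ) (Set.Icc s T) := by
    have hmul : Continuous (fun p : Matrix (Fin d) (Fin d) ℝ × Matrix (Fin d) (Fin d) ℝ
        => p.1 * p.2) := continuous_fst.matrix_mul continuous_snd
    have h1 : ContinuousOn (fun τ => Φ s τ * atil τ) (Set.Icc s T) :=
      hmul.comp_continuousOn (hΦs.prodMk has)
    have h2 : ContinuousOn (fun τ => (Φ s τ)ᵀ) (Set.Icc s T) :=
      (Continuous.matrix_transpose continuous_id).comp_continuousOn hΦs
    exact hmul.comp_continuousOn (h1.prodMk h2)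
  letI : ENormedAddMonoid (Matrix (Fin d) (Fin d) ℝ) := NormedAddGroup.toENormedAddMonoid
  have hGint : IntervalIntegrable (fun τ => Φ s τ * atil τ * (Φ s τ)ᵀ)
      MeasureTheory.volume s T := by
    apply ContinuousOn.intervalIntegrable
    rwa [Set.uIcc_of_le hsle]
  set L := auxQF y with hL
  have hrep : y ⬝ᵥ (Hinv s *ᵥ y)
      = ∫ τ in s..T, y ⬝ᵥ ((Φ s τ * atil τ * (Φ s τ)ᵀ) *ᵥ y) := by
    rw [hHinv s hs]
    have := L.intervalIntegral_comp_comm hGint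
    exact this.symm
  have hf_int : IntervalIntegrable
      (fun τ => y ⬝ᵥ ((Φ s τ * atil τ * (Φ s τ)ᵀ) *ᵥ y)) MeasureTheory.volume s T := by
    have : ContinuousOn (fun τ => L (Φ s τ * atil τ * (Φ s τ)ᵀ)) (Set.Icc s T) :=
      L.continuous.comp_continuousOn hGcont
    have h2 : ContinuousOn
        (fun τ => y ⬝ᵥ ((Φ s τ * atil τ * (Φ s τ)ᵀ) *ᵥ y)) (Set.Icc s T) := by
      simpa [hL] using this
    apply ContinuousOn.intervalIntegrable
    rw [Set.uIcc_of_le hsle]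
    exact h2
  constructor
  · -- lower
    rw [hrep]
    have h1 : c * (T - s) * (y ⬝ᵥ y) = ∫ _τ in s..T, c * (y ⬝ᵥ y) := by
      rw [intervalIntegral.integral_const, smul_eq_mul]; ring
    rw [h1]
    refine intervalIntegral.integral_mono_on hsle intervalIntegrable_const hf_int ?_
    intro τ hτ
    have := (key τ hτ).1
    have hle : c * (y ⬝ᵥ y) ≤ c₀ * (y ⬝ᵥ y) :=
      mul_le_mul_of_nonneg_right (min_le_left _ _) hyy
    exact le_trans hle this
  · -- upper
    rw [hrep]
    have h1 : ctil * (T - s) * (y ⬝ᵥ y) = ∫ _τ in s..T, ctil * (y ⬝ᵥ y) := by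
      rw [intervalIntegral.integral_const, smul_eq_mul]; ring
    rw [h1]
    refine intervalIntegral.integral_mono_on hsle hf_int intervalIntegrable_const ?_
    intro τ hτ
    exact (key τ hτ).2
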